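/- With the setup of the bipartite-components streaming model (components K_{s i, s i}, unit weights, c = 2, n = 2·∑ i, s i): if some allocation r : V → Fin 2 achieves streaming cost at most n, i.e., for all components i and all left–right pairs (u,v) in component i, n(r u) + n(r v) + (1 if r u ≠ r v else 0) ≤ n, then there exists T ⊆ Fin k with ∑_{i ∈ T} s i = ∑_{i ∉ T} s i. -/

import Mathlib

/-- Partition reduction, converse direction: for the parallel composition of complete
bipartite components `K_{s i, s i}` with unit weights, `c = 2` resources and
`n = 2·∑ i, s i` tasks, if some allocation `r` achieves streaming cost at most `n`
(on every left–right pair of every component), then the multiset `{s i}` admits a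
perfect partition. -/
theorem streaming_cost_to_partition (k : ℕ) (hk : 1 ≤ k)
    (s : Fin k → ℕ) (hs : ∀ i, 1 ≤ s i) (n : ℕ) (hn : n = 2 * ∑ i, s i)
    (r : (Σ i : Fin k, Fin (s i) ⊕ Fin (s i)) → Fin 2)
    (hcost : ∀ (i : Fin k) (u v : Fin (s i)),
        (Finset.univ.filter fun z : Σ i : Fin k, Fin (s i) ⊕ Fin (s i) =>
            r z = r ⟨i, Sum.inl u⟩).card
          + (Finset.univ.filter fun z : Σ i : Fin k, Fin (s i) ⊕ Fin (s i) =>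
              r z = r ⟨i, Sum.inr v⟩).card
          + (if r ⟨i, Sum.inl u⟩ ≠ r ⟨i, Sum.inr v⟩ then 1 else 0) ≤ n) :
    ∃ T : Finset (Fin k), ∑ i ∈ T, s i = ∑ i ∈ Tᶜ, s i := by
  classical
  set S := ∑ i, s i with hS
  have hS1 : 1 ≤ S := by
    calc 1 ≤ s ⟨0, hk⟩ := hs _
    _ ≤ S := Finset.single_le_sum (f := s) (fun _ _ => Nat.zero_le _) (Finset.mem_univ _)
  have hcardV : Fintype.card (Σ i : Fin k, Fin (s i) ⊕ Fin (s i)) = n := by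
    simp [hn, two_mul, Finset.sum_add_distrib, hS]
  have key2 : ∀ (a b x : Fin 2), a ≠ b → (x = b ↔ ¬ x = a) := by decide
  -- all vertices of a component share one color
  have heq : ∀ (i : Fin k) (u v : Fin (s i)), r ⟨i, Sum.inl u⟩ = r ⟨i, Sum.inr v⟩ := by
    intro i u v
    by_contra hne
    have h := hcost i u v
    rw [if_pos hne] at h
    have hsum : (Finset.univ.filter fun z : Σ i : Fin k, Fin (s i) ⊕ Fin (s i) =>
          r z = r ⟨i, Sum.inl u⟩).card
        + (Finset.univ.filter fun z : Σ i : Fin k, Fin (s i) ⊕ Fin (s i) =>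
            r z = r ⟨i, Sum.inr v⟩).card = n := by
      have heq2 : (Finset.univ.filter fun z : Σ i : Fin k, Fin (s i) ⊕ Fin (s i) =>
            r z = r ⟨i, Sum.inr v⟩)
          = (Finset.univ.filter fun z : Σ i : Fin k, Fin (s i) ⊕ Fin (s i) =>
              ¬ r z = r ⟨i, Sum.inl u⟩) := by
        apply Finset.filter_congr
        intro z _
        exact key2 _ _ _ hne
      rw [heq2, Finset.card_filter_add_card_filter_not, Finset.card_univ, hcardV]
    omega
  set c : Fin k → Fin 2 := fun i => r ⟨i, Sum.inl ⟨0, hs i⟩⟩ with hc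
  have hmono : ∀ (i : Fin k) (x : Fin (s i) ⊕ Fin (s i)), r ⟨i, x⟩ = c i := by
    intro i x
    cases x with
    | inl u =>
      rw [heq i u ⟨0, hs i⟩, ← heq i ⟨0, hs i⟩ ⟨0, hs i⟩]
    | inr v => rw [← heq i ⟨0, hs i⟩ v]
  -- compute the load of each color
  have hN : ∀ R : Fin 2, (Finset.univ.filter fun z : Σ i : Fin k, Fin (s i) ⊕ Fin (s i) =>
        r z = R).card
      = ∑ i, if c i = R then 2 * s i else 0 := by
    intro R
    rw [Finset.card_filter]
    rw [show (Finset.univ : Finset (Σ i : Fin k, Fin (s i) ⊕ Fin (s i)))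
        = Finset.univ.sigma fun _ => Finset.univ from (Finset.univ_sigma_univ).symm]
    rw [Finset.sum_sigma]
    apply Finset.sum_congr rfl
    intro i _
    by_cases h : c i = R
    · simp [hmono, h, two_mul]
    · simp [hmono, h]
  have hNsum : (∑ i, if c i = 0 then 2 * s i else 0)
      + (∑ i, if c i = 1 then 2 * s i else 0) = 2 * S := by
    rw [← hN 0, ← hN 1]
    have heq2 : (Finset.univ.filter fun z : Σ i : Fin k, Fin (s i) ⊕ Fin (s i) => r z = 1)
        = (Finset.univ.filter fun z : Σ i : Fin k, Fin (s i) ⊕ Fin (s i) => ¬ r z = 0) := by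
      apply Finset.filter_congr
      intro z _
      exact key2 0 1 _ (by decide)
    rw [heq2, Finset.card_filter_add_card_filter_not, Finset.card_univ, hcardV, hn]
  -- bound for each used color
  have hbound : ∀ i : Fin k, (Finset.univ.filter
      fun z : Σ i : Fin k, Fin (s i) ⊕ Fin (s i) => r z = c i).card ≤ S := by
    intro i
    have h := hcost i ⟨0, hs i⟩ ⟨0, hs i⟩
    rw [hmono i (Sum.inl ⟨0, hs i⟩), hmono i (Sum.inr ⟨0, hs i⟩)] at h
    simp only [ne_eq, not_true_eq_false, if_false] at h
    omega
  -- both colors are used, loads are S each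
  have hN0 : (∑ i, if c i = 0 then 2 * s i else 0) = S := by
    by_cases h0 : ∃ i, c i = 0
    · obtain ⟨i0, hi0⟩ := h0
      by_cases h1 : ∃ i, c i = 1
      · obtain ⟨i1, hi1⟩ := h1
        have b0 := hbound i0
        have b1 := hbound i1
        rw [hi0, hN 0] at b0
        rw [hi1, hN 1] at b1
        omega
      · push_neg at h1
        have ball : ∀ i, c i = 0 := fun i => (key2 1 0 (c i) (by decide)).mpr (h1 i)
        have hall : (∑ i, if c i = 0 then 2 * s i else 0) = 2 * S := by
          simp [ball, hS, Finset.mul_sum]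
        have b0 := hbound ⟨0, hk⟩
        rw [ball, hN 0] at b0
        omega
    · push_neg at h0
      have ball : ∀ i, c i = 1 := fun i => (key2 0 1 (c i) (by decide)).mpr (h0 i)
      have h1 : (∑ i, if c i = 1 then 2 * s i else 0) = 2 * S := by
        simp [ball, hS, Finset.mul_sum]
      have b1 := hbound ⟨0, hk⟩
      rw [ball, hN 1] at b1
      omega
  refine ⟨Finset.univ.filter fun i => c i = 0, ?_⟩
  have hT0 : ∑ i ∈ Finset.univ.filter (fun i => c i = 0), 2 * s i = S := by
    rw [← hN0, Finset.sum_filter]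
  have hcompl : (Finset.univ.filter fun i => c i = 0)ᶜ
      = Finset.univ.filter fun i => ¬ c i = 0 := by
    ext i; simp
  have hsplit : ∑ i ∈ Finset.univ.filter (fun i => c i = 0), s i
      + ∑ i ∈ Finset.univ.filter (fun i => ¬ c i = 0), s i = S :=
    Finset.sum_filter_add_sum_filter_not _ _ _
  rw [hcompl]
  have h2 : 2 * ∑ i ∈ Finset.univ.filter (fun i => c i = 0), s i = S := by
    rw [← hT0, Finset.mul_sum]
  omega
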